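/- Let H_1, …, H_n be non-solvable groups and let ρ : H_1 × ⋯ × H_n → GL_d(ℂ) be a faithful linear representation. Then d ≥ 2n. -/

import Mathlib

open Module Submodule

section Aux

theorem aux_solvable_ext {G H : Type*} [Group G] [Group H] (f : G →* H)
    (hker : ∀ x y : f.ker, x * y = y * x) (hr : Group.IsSolvable f.range) : Group.IsSolvable G := by
  have h1 : Group.IsSolvable f.ker := isSolvable_of_comm hker
  exact solvable_of_ker_le_range f.ker.subtype f.rangeRestrict
    (by rw [MonoidHom.ker_rangeRestrict, Subgroup.range_subtype])

variable {V : Type} [AddCommGroup V] [Module ℂ V]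

noncomputable def resHom (T : Subgroup (Module.End ℂ V)ˣ) (p : Submodule ℂ V)
    (hp : ∀ g ∈ T, ∀ v ∈ p, (g : Module.End ℂ V) v ∈ p) : ↥T →* (Module.End ℂ ↥p)ˣ where
  toFun g :=
    { val := LinearMap.restrict (g.1 : Module.End ℂ V) (fun v hv => hp g.1 g.2 v hv)
      inv := LinearMap.restrict ((g.1⁻¹ : (Module.End ℂ V)ˣ) : Module.End ℂ V)
        (fun v hv => hp g.1⁻¹ (inv_mem g.2) v hv)
      val_inv := LinearMap.ext fun w => Subtype.ext (by
        rw [Module.End.mul_apply, Module.End.one_apply, LinearMap.restrict_coe_apply,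
          LinearMap.restrict_coe_apply, ← Module.End.mul_apply, ← Units.val_mul]
        simp)
      inv_val := LinearMap.ext fun w => Subtype.ext (by
        rw [Module.End.mul_apply, Module.End.one_apply, LinearMap.restrict_coe_apply,
          LinearMap.restrict_coe_apply, ← Module.End.mul_apply, ← Units.val_mul]
        simp) }
  map_one' := Units.ext (LinearMap.ext fun w => Subtype.ext (by
    simp [LinearMap.restrict_coe_apply]))
  map_mul' g h := Units.ext (LinearMap.ext fun w => Subtype.ext (by
    simp [LinearMap.restrict_coe_apply, Module.End.mul_apply]))

@[simp] theorem resHom_apply_coe (T : Subgroup (Module.End ℂ V)ˣ) (p : Submodule ℂ V)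
    (hp : ∀ g ∈ T, ∀ v ∈ p, (g : Module.End ℂ V) v ∈ p) (g : ↥T) (w : ↥p) :
    ((((resHom T p hp) g : (Module.End ℂ ↥p)ˣ) : Module.End ℂ ↥p) w : V)
      = (g.1 : Module.End ℂ V) w := rfl

end Aux

section Quot

variable {V : Type} [AddCommGroup V] [Module ℂ V]

noncomputable def quotHom (T : Subgroup (Module.End ℂ V)ˣ) (p : Submodule ℂ V)
    (hp : ∀ g ∈ T, ∀ v ∈ p, (g : Module.End ℂ V) v ∈ p) :
    ↥T →* (Module.End ℂ (V ⧸ p))ˣ where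
  toFun g :=
    { val := p.mapQ p (g.1 : Module.End ℂ V) (fun v hv => hp g.1 g.2 v hv)
      inv := p.mapQ p ((g.1⁻¹ : (Module.End ℂ V)ˣ) : Module.End ℂ V)
        (fun v hv => hp g.1⁻¹ (inv_mem g.2) v hv)
      val_inv := p.linearMap_qext (LinearMap.ext fun v => by
        simp only [Module.End.mul_apply, LinearMap.comp_apply, Submodule.mkQ_apply,
          Submodule.mapQ_apply, Module.End.one_apply]
        rw [← Module.End.mul_apply (g.1 : Module.End ℂ V), ← Units.val_mul]
        simp)
      inv_val := p.linearMap_qext (LinearMap.ext fun v => by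
        simp only [Module.End.mul_apply, LinearMap.comp_apply, Submodule.mkQ_apply,
          Submodule.mapQ_apply, Module.End.one_apply]
        rw [← Module.End.mul_apply ((g.1⁻¹ : (Module.End ℂ V)ˣ) : Module.End ℂ V), ← Units.val_mul]
        simp) }
  map_one' := Units.ext (p.linearMap_qext (LinearMap.ext fun v => by
    simp [Submodule.mapQ_apply]))
  map_mul' g h := Units.ext (p.linearMap_qext (LinearMap.ext fun v => by
    simp [Submodule.mapQ_apply, Module.End.mul_apply]))

@[simp] theorem quotHom_apply (T : Subgroup (Module.End ℂ V)ˣ) (p : Submodule ℂ V)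
    (hp : ∀ g ∈ T, ∀ v ∈ p, (g : Module.End ℂ V) v ∈ p) (g : ↥T) (v : V) :
    (((quotHom T p hp) g : (Module.End ℂ (V ⧸ p))ˣ) : Module.End ℂ (V ⧸ p))
      (Submodule.Quotient.mk v) = Submodule.Quotient.mk ((g.1 : Module.End ℂ V) v) :=
  Submodule.mapQ_apply _ _ _ (h := fun v hv => hp g.1 g.2 v hv) v

end Quot

section Post

variable {V W : Type} [AddCommGroup V] [Module ℂ V] [AddCommGroup W] [Module ℂ W]

noncomputable def postHom (Mset : Submodule ℂ (W →ₗ[ℂ] V)) (T : Subgroup (Module.End ℂ V)ˣ)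
    (hT : ∀ g ∈ T, ∀ f ∈ Mset, (g : Module.End ℂ V) ∘ₗ f ∈ Mset) :
    ↥T →* (Module.End ℂ ↥Mset)ˣ where
  toFun g :=
    { val :=
        { toFun := fun f => ⟨(g.1 : Module.End ℂ V) ∘ₗ f.1, hT g.1 g.2 f.1 f.2⟩
          map_add' := fun f1 f2 => Subtype.ext (by
            ext w
            simp)
          map_smul' := fun c f => Subtype.ext (by
            ext w
            simp) }
      inv :=
        { toFun := fun f => ⟨((g.1⁻¹ : (Module.End ℂ V)ˣ) : Module.End ℂ V) ∘ₗ f.1,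
            hT _ (inv_mem g.2) f.1 f.2⟩
          map_add' := fun f1 f2 => Subtype.ext (by
            ext w
            simp)
          map_smul' := fun c f => Subtype.ext (by
            ext w
            simp) }
      val_inv := LinearMap.ext fun f => Subtype.ext (LinearMap.ext fun w => by
        simp only [Module.End.mul_apply, LinearMap.coe_mk, AddHom.coe_mk, LinearMap.comp_apply,
          Module.End.one_apply]
        rw [← Module.End.mul_apply ((g.1 : Module.End ℂ V)), ← Units.val_mul]
        simp)
      inv_val := LinearMap.ext fun f => Subtype.ext (LinearMap.ext fun w => by
        simp only [Module.End.mul_apply, LinearMap.coe_mk, AddHom.coe_mk, LinearMap.comp_apply,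
          Module.End.one_apply]
        rw [← Module.End.mul_apply (((g.1⁻¹ : (Module.End ℂ V)ˣ) : Module.End ℂ V)), ← Units.val_mul]
        simp) }
  map_one' := Units.ext (LinearMap.ext fun f => Subtype.ext (LinearMap.ext fun w => by simp))
  map_mul' g h := Units.ext (LinearMap.ext fun f => Subtype.ext (LinearMap.ext fun w => by
    simp [Module.End.mul_apply]))

@[simp] theorem postHom_apply_coe (Mset : Submodule ℂ (W →ₗ[ℂ] V))
    (T : Subgroup (Module.End ℂ V)ˣ)
    (hT : ∀ g ∈ T, ∀ f ∈ Mset, (g : Module.End ℂ V) ∘ₗ f ∈ Mset) (g : ↥T) (f : ↥Mset) :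
    ((((postHom Mset T hT) g).val) f : W →ₗ[ℂ] V) = (g.1 : Module.End ℂ V) ∘ₗ f.1 := rfl

end Post

def MasterStmt (N : ℕ) : Prop :=
  ∀ (V : Type) [AddCommGroup V] [Module ℂ V] [FiniteDimensional ℂ V],
    Module.finrank ℂ V ≤ N →
    ∀ (ι : Type) [Fintype ι] (S : ι → Subgroup (Module.End ℂ V)ˣ),
      (∀ i, ¬ Group.IsSolvable (S i)) →
      (∀ i j, i ≠ j → ∀ x ∈ S i, ∀ y ∈ S j, Commute x y) →
      2 * Fintype.card ι ≤ Module.finrank ℂ V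

theorem subsingleton_solvable {V : Type} [AddCommGroup V] [Module ℂ V] (hV : Subsingleton V)
    (S : Subgroup (Module.End ℂ V)ˣ) : Group.IsSolvable S := by
  have h1 : Subsingleton (Module.End ℂ V) := ⟨fun a b => LinearMap.ext fun v => Subsingleton.elim _ _⟩
  have h2 : Subsingleton (Module.End ℂ V)ˣ := ⟨fun a b => Units.ext (Subsingleton.elim _ _)⟩
  have h3 : Subsingleton S := ⟨fun a b => Subtype.ext (Subsingleton.elim _ _)⟩
  infer_instance

set_option maxHeartbeats 2000000 in
theorem master (N : ℕ) : MasterStmt N := by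
  induction N with
  | zero =>
    intro V _ _ _ hfr ι _ S hS hcomm
    rcases isEmpty_or_nonempty ι with h | h
    · simp [Fintype.card_eq_zero]
    · obtain ⟨i⟩ := h
      have hV : Subsingleton V := by
        rw [← finrank_zero_iff (R := ℂ)]; omega
      exact absurd (subsingleton_solvable hV (S i)) (hS i)
  | succ N IH =>
    intro V _ _ _ hfr ι _ S hS hcomm
    classical
    rcases isEmpty_or_nonempty ι with hι | hι
    · simp [Fintype.card_eq_zero]
    obtain ⟨i₀⟩ := hι
    rcases subsingleton_or_nontrivial V with hV | hVnt
    · exact absurd (subsingleton_solvable hV (S i₀)) (hS i₀)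
    by_cases hred : ∃ W : Submodule ℂ V, W ≠ ⊥ ∧ W ≠ ⊤ ∧
        ∀ i, ∀ g ∈ S i, ∀ v ∈ W, (g : Module.End ℂ V) v ∈ W
    · -- reducible case
      obtain ⟨W, hWbot, hWtop, hWinv⟩ := hred
      set F1 : ∀ i, ↥(S i) →* (Module.End ℂ ↥W)ˣ :=
        fun i => resHom (S i) W (hWinv i) with hF1
      set F2 : ∀ i, ↥(S i) →* (Module.End ℂ (V ⧸ W))ˣ :=
        fun i => quotHom (S i) W (hWinv i) with hF2
      have key : ∀ i, ¬ Group.IsSolvable (F1 i).range ∨ ¬ Group.IsSolvable (F2 i).range := by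
        intro i
        by_contra h
        rw [not_or, not_not, not_not] at h
        obtain ⟨h1, h2⟩ := h
        apply hS i
        apply aux_solvable_ext ((F1 i).prod (F2 i))
        · -- abelian kernel
          rintro ⟨x, hx⟩ ⟨y, hy⟩
          rw [MonoidHom.mem_ker, MonoidHom.prod_apply, Prod.mk_eq_one] at hx hy
          apply Subtype.ext
          show x * y = y * x
          apply Subtype.ext
          apply Units.ext
          apply LinearMap.ext
          intro v
          set a : Module.End ℂ V := (x.1 : Module.End ℂ V)
          set b : Module.End ℂ V := (y.1 : Module.End ℂ V)
          have hfix : ∀ (z : ↥(S i)), F1 i z = 1 → ∀ w ∈ W, (z.1 : Module.End ℂ V) w = w := by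
            intro z hz w hw
            have := congrArg (fun (u : (Module.End ℂ ↥W)ˣ) =>
              ((u : Module.End ℂ ↥W) ⟨w, hw⟩ : V)) hz
            simpa [hF1] using this
          have hmod : ∀ (z : ↥(S i)), F2 i z = 1 →
              ∀ v : V, (z.1 : Module.End ℂ V) v - v ∈ W := by
            intro z hz v
            have := congrArg (fun (u : (Module.End ℂ (V ⧸ W))ˣ) =>
              (u : Module.End ℂ (V ⧸ W)) (Submodule.Quotient.mk v)) hz
            simp only [quotHom_apply, Module.End.one_apply, Units.val_one] at this
            rw [← Submodule.Quotient.eq]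
            exact this
          have hab : ∀ (z w : ↥(S i)), F1 i z = 1 → F2 i w = 1 →
              ∀ v : V, (z.1 : Module.End ℂ V) ((w.1 : Module.End ℂ V) v)
                = (z.1 : Module.End ℂ V) v + (w.1 : Module.End ℂ V) v - v := by
            intro z w hz hw v
            set c : Module.End ℂ V := (z.1 : Module.End ℂ V)
            set e : Module.End ℂ V := (w.1 : Module.End ℂ V)
            have h3 : e v - v ∈ W := hmod w hw v
            have h4 : v + (e v - v) = e v := by abel
            rw [← h4, map_add, hfix z hz _ h3]
            abel
          simp only [Subgroup.coe_mul, Units.val_mul, Module.End.mul_apply]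
          rw [hab x y hx.1 hy.2 v, hab y x hy.1 hx.2 v]
          abel
        · -- solvable range
          haveI := h1
          haveI := h2
          have hsP : Group.IsSolvable ((F1 i).range.prod (F2 i).range) :=
            solvable_of_solvable_injective
              (f := (Subgroup.prodEquiv (F1 i).range (F2 i).range).toMonoidHom)
              (Subgroup.prodEquiv (F1 i).range (F2 i).range).injective
          have hle : ((F1 i).prod (F2 i)).range ≤ (F1 i).range.prod (F2 i).range := by
            rintro ⟨u, v⟩ ⟨g, hg⟩
            rw [MonoidHom.prod_apply, Prod.mk.injEq] at hg
            exact ⟨⟨g, hg.1⟩, ⟨g, hg.2⟩⟩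
          haveI := hsP
          exact solvable_of_solvable_injective (f := Subgroup.inclusion hle)
            (Subgroup.inclusion_injective hle)
      set p : ι → Prop := fun i => ¬ Group.IsSolvable (F1 i).range with hp
      have hWlt : Module.finrank ℂ ↥W < Module.finrank ℂ V :=
        Submodule.finrank_lt hWtop
      have hWpos : 0 < Module.finrank ℂ ↥W := by
        haveI : Nontrivial ↥W := Submodule.nontrivial_iff_ne_bot.mpr hWbot
        exact Module.finrank_pos
      have hsum := Submodule.finrank_quotient_add_finrank W
      have hA : 2 * Fintype.card {i // p i} ≤ Module.finrank ℂ ↥W := by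
        refine IH ↥W (by omega) {i // p i} (fun i => (F1 i.1).range) (fun i => i.2) ?_
        rintro i j hij x ⟨g, rfl⟩ y ⟨h, rfl⟩
        have hij' : i.1 ≠ j.1 := fun hh => hij (Subtype.ext hh)
        have hc := congrArg Units.val (hcomm i.1 j.1 hij' g.1 g.2 h.1 h.2)
        simp only [Units.val_mul] at hc
        show _ * _ = _ * _
        refine Units.ext (LinearMap.ext fun w => Subtype.ext ?_)
        simp only [Units.val_mul, Module.End.mul_apply, hF1, resHom_apply_coe]
        have := LinearMap.congr_fun hc (w : V)
        simpa [Module.End.mul_apply] using this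
      have hB : 2 * Fintype.card {i // ¬ p i} ≤ Module.finrank ℂ (V ⧸ W) := by
        refine IH (V ⧸ W) (by omega) {i // ¬ p i} (fun i => (F2 i.1).range)
          (fun i => Or.resolve_left (key i.1) i.2) ?_
        rintro i j hij x ⟨g, rfl⟩ y ⟨h, rfl⟩
        have hij' : i.1 ≠ j.1 := fun hh => hij (Subtype.ext hh)
        have hc := congrArg Units.val (hcomm i.1 j.1 hij' g.1 g.2 h.1 h.2)
        simp only [Units.val_mul] at hc
        show _ * _ = _ * _
        refine Units.ext (LinearMap.ext fun q => ?_)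
        obtain ⟨v, rfl⟩ := Submodule.Quotient.mk_surjective W q
        simp only [Units.val_mul, Module.End.mul_apply, hF2, quotHom_apply]
        have := LinearMap.congr_fun hc v
        simp only [Module.End.mul_apply] at this
        rw [this]
      have hcards : Fintype.card {i // p i} + Fintype.card {i // ¬ p i} = Fintype.card ι := by
        have h1 := Fintype.card_subtype_compl p
        have h2 := Fintype.card_subtype_le p
        omega
      omega
    · -- irreducible case
      have hsimp : ∀ W : Submodule ℂ V,
          (∀ i, ∀ g ∈ S i, ∀ v ∈ W, (g : Module.End ℂ V) v ∈ W) → W = ⊥ ∨ W = ⊤ := by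
        intro W hW
        by_contra h
        rw [not_or] at h
        exact hred ⟨W, h.1, h.2, hW⟩
      set P : Submodule ℂ V → Prop :=
        fun q => q ≠ ⊥ ∧ ∀ g ∈ S i₀, ∀ v ∈ q, (g : Module.End ℂ V) v ∈ q with hP
      have hPtop : P ⊤ := ⟨top_ne_bot, fun g _ v _ => trivial⟩
      have hD : {m | ∃ q, P q ∧ Module.finrank ℂ q = m}.Nonempty := ⟨_, ⊤, hPtop, rfl⟩
      obtain ⟨W₀, hW₀P, hW₀rank⟩ := Nat.sInf_mem hD
      have hW₀bot : W₀ ≠ ⊥ := hW₀P.1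
      have hW₀inv := hW₀P.2
      haveI : Nontrivial ↥W₀ := Submodule.nontrivial_iff_ne_bot.mpr hW₀bot
      have hmin : ∀ q : Submodule ℂ V, q ≤ W₀ → P q → q = W₀ := by
        intro q hle hq
        have h1 : sInf {m | ∃ q, P q ∧ Module.finrank ℂ q = m} ≤ Module.finrank ℂ q :=
          Nat.sInf_le ⟨q, hq, rfl⟩
        exact Submodule.eq_of_le_of_finrank_le hle (by omega)
      set res : ↥(S i₀) →* (Module.End ℂ ↥W₀)ˣ := resHom (S i₀) W₀ hW₀inv with hresdef
      have hminK : ∀ K : Submodule ℂ ↥W₀, K ≠ ⊥ →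
          (∀ (g : ↥(S i₀)), ∀ w ∈ K, (res g).val w ∈ K) → K = ⊤ := by
        intro K hKbot hKinv
        have h2 : P (K.map W₀.subtype) := by
          constructor
          · intro hb
            apply hKbot
            apply Submodule.map_injective_of_injective W₀.injective_subtype
            rw [hb, Submodule.map_bot]
          · rintro g hg v ⟨w, hw, rfl⟩
            exact ⟨(res ⟨g, hg⟩).val w, hKinv ⟨g, hg⟩ w hw, rfl⟩
        have h3 := hmin _ (Submodule.map_subtype_le W₀ K) h2
        apply Submodule.map_injective_of_injective W₀.injective_subtype
        rw [h3, Submodule.map_top, Submodule.range_subtype]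
      have schur : ∀ φ : Module.End ℂ ↥W₀,
          (∀ (g : ↥(S i₀)), Commute φ ((res g).val)) → ∃ c : ℂ, φ = c • (1 : Module.End ℂ ↥W₀) := by
        intro φ hφ
        obtain ⟨μ, hμ⟩ := Module.End.exists_eigenvalue φ
        obtain ⟨w, hw⟩ := hμ.exists_hasEigenvector
        set ψ : Module.End ℂ ↥W₀ := φ - μ • (1 : Module.End ℂ ↥W₀) with hψdef
        have hψw : ψ w = 0 := by
          simp [hψdef, hw.apply_eq_smul, sub_eq_zero]
        have hker : LinearMap.ker ψ ≠ ⊥ := by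
          intro h
          apply hw.2
          have : w ∈ LinearMap.ker ψ := LinearMap.mem_ker.mpr hψw
          rwa [h, Submodule.mem_bot] at this
        have hinv : ∀ (g : ↥(S i₀)), ∀ w' ∈ LinearMap.ker ψ, (res g).val w' ∈ LinearMap.ker ψ := by
          intro g w' hw'
          rw [LinearMap.mem_ker] at hw' ⊢
          have hcom : ψ * (res g).val = (res g).val * ψ := by
            simp only [hψdef, sub_mul, mul_sub, smul_mul_assoc, mul_smul_comm, one_mul, mul_one]
            rw [hφ g]
          have := LinearMap.congr_fun hcom w'
          simp only [Module.End.mul_apply] at this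
          rw [this, hw', map_zero]
        have htop := hminK _ hker hinv
        refine ⟨μ, ?_⟩
        have hz : ψ = 0 := LinearMap.ker_eq_top.mp htop
        exact sub_eq_zero.mp hz
      set Mset : Submodule ℂ (↥W₀ →ₗ[ℂ] V) :=
        { carrier := {f | ∀ (g : ↥(S i₀)) (w : ↥W₀), f ((res g).val w) = (g.1 : Module.End ℂ V) (f w)}
          add_mem' := by
            intro f1 f2 h1 h2 g w
            simp only [LinearMap.add_apply, h1 g w, h2 g w, map_add]
          zero_mem' := by
            intro g w
            simp
          smul_mem' := by
            intro c f h g w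
            simp only [LinearMap.smul_apply, h g w, map_smul] } with hMdef
      have hMmem : ∀ f : ↥W₀ →ₗ[ℂ] V, f ∈ Mset ↔
          ∀ (g : ↥(S i₀)) (w : ↥W₀), f ((res g).val w) = (g.1 : Module.End ℂ V) (f w) :=
        fun f => Iff.rfl
      have hsub : W₀.subtype ∈ Mset := by
        intro g w
        rfl
      set E : Submodule ℂ V := ⨆ f : ↥Mset, LinearMap.range (f.1 : ↥W₀ →ₗ[ℂ] V) with hEdef
      have hcompM : ∀ (i : ι), i ≠ i₀ → ∀ g ∈ S i, ∀ f ∈ Mset,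
          (g : Module.End ℂ V) ∘ₗ f ∈ Mset := by
        intro i hi g hg f hf h w
        have hc := congrArg Units.val (hcomm i i₀ hi g hg h.1 h.2)
        simp only [Units.val_mul] at hc
        have hc' := LinearMap.congr_fun hc (f w)
        simp only [Module.End.mul_apply] at hc'
        simp only [LinearMap.comp_apply, hf h w]
        exact hc'
      have hEinv : ∀ i, ∀ g ∈ S i, ∀ v ∈ E, (g : Module.End ℂ V) v ∈ E := by
        intro i g hg v hv
        refine Submodule.iSup_induction (motive := fun v => (g : Module.End ℂ V) v ∈ E)
          _ hv ?_ ?_ ?_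
        · rintro f x ⟨w, rfl⟩
          by_cases hi : i = i₀
          · subst hi
            have : (g : Module.End ℂ V) (f.1 w) = f.1 ((res ⟨g, hg⟩).val w) :=
              (f.2 ⟨g, hg⟩ w).symm
            rw [this]
            exact Submodule.mem_iSup_of_mem f ⟨_, rfl⟩
          · have hmem : (g : Module.End ℂ V) ∘ₗ f.1 ∈ Mset := hcompM i hi g hg f.1 f.2
            exact Submodule.mem_iSup_of_mem ⟨_, hmem⟩ ⟨w, rfl⟩
        · simp
        · intro x y hx hy
          rw [map_add]
          exact Submodule.add_mem E hx hy
      have hW₀E : W₀ ≤ E := by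
        intro v hv
        exact Submodule.mem_iSup_of_mem ⟨W₀.subtype, hsub⟩ ⟨⟨v, hv⟩, rfl⟩
      have hEtop : E = ⊤ := by
        refine (hsimp E hEinv).resolve_left ?_
        intro h
        exact hW₀bot (le_bot_iff.mp (h ▸ hW₀E))
      have hsplit : ∀ (κ : Type) [Fintype κ] [DecidableEq κ] (t₀ : κ) (β : Type)
          [AddCommMonoid β] (F : κ → β),
          ∑ t, F t = F t₀ + ∑ t : {t : κ // t ≠ t₀}, F t.1 := by
        intro κ _ _ t₀ β _ F
        rw [← Finset.add_sum_erase Finset.univ F (Finset.mem_univ t₀)]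
        congr 1
        refine Finset.sum_subtype _ (fun x => ?_) F
        simp [Finset.mem_erase]
      have C : ∀ (s : ℕ) (κ : Type) [Fintype κ], Fintype.card κ ≤ s →
          ∀ f : κ → (↥W₀ →ₗ[ℂ] V), (∀ t, f t ∈ Mset) → LinearIndependent ℂ f →
          ∀ u : κ → ↥W₀, (∑ t, f t (u t)) = 0 → ∀ t, u t = 0 := by
        intro s
        induction s with
        | zero =>
          intro κ _ hcard f _ _ u _ t
          have : 0 < Fintype.card κ := Fintype.card_pos_iff.mpr ⟨t⟩
          omega
        | succ s IHs =>
          intro κ _ hcard f hfM hind u hsum t₀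
          by_contra hu0
          haveI : DecidableEq κ := Classical.decEq κ
          have hcard' : Fintype.card {t : κ // t ≠ t₀} ≤ s := by
            have h1 : Fintype.card {t : κ // t ≠ t₀}
                = Fintype.card κ - Fintype.card {t : κ // t = t₀} :=
              Fintype.card_subtype_compl _
            have h2 : Fintype.card {t : κ // t = t₀} = 1 := Fintype.card_subtype_eq t₀
            have h3 : 0 < Fintype.card κ := Fintype.card_pos_iff.mpr ⟨t₀⟩
            omega
          have hind' : LinearIndependent ℂ (fun t : {t : κ // t ≠ t₀} => f t.1) :=
            hind.comp _ Subtype.val_injective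
          have huniq : ∀ (w : ↥W₀) (uu uu' : {t : κ // t ≠ t₀} → ↥W₀),
              f t₀ w + ∑ t : {t : κ // t ≠ t₀}, f t.1 (uu t) = 0 →
              f t₀ w + ∑ t : {t : κ // t ≠ t₀}, f t.1 (uu' t) = 0 →
              ∀ t : {t : κ // t ≠ t₀}, uu t = uu' t := by
            intro w uu uu' h1 h2 t
            have h3 : ∑ t : {t : κ // t ≠ t₀}, f t.1 (uu t - uu' t) = 0 := by
              simp only [map_sub]
              rw [Finset.sum_sub_distrib]
              have h4 : (f t₀ w + ∑ t : {t : κ // t ≠ t₀}, f t.1 (uu t))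
                  - (f t₀ w + ∑ t : {t : κ // t ≠ t₀}, f t.1 (uu' t)) = 0 := by
                rw [h1, h2, sub_zero]
              rw [← h4]
              abel
            have h5 := IHs {t : κ // t ≠ t₀} hcard' _ (fun t => hfM t.1) hind' _ h3 t
            exact sub_eq_zero.mp h5
          set K : Submodule ℂ ↥W₀ :=
            { carrier := {w | ∃ uu : {t : κ // t ≠ t₀} → ↥W₀,
                f t₀ w + ∑ t : {t : κ // t ≠ t₀}, f t.1 (uu t) = 0}
              add_mem' := by
                rintro a b ⟨ua, ha⟩ ⟨ub, hb⟩
                have h6 : f t₀ (a + b) + ∑ t : {t : κ // t ≠ t₀}, f t.1 (ua t + ub t) = 0 := by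
                  have h7 : (f t₀ a + ∑ t : {t : κ // t ≠ t₀}, f t.1 (ua t))
                      + (f t₀ b + ∑ t : {t : κ // t ≠ t₀}, f t.1 (ub t)) = 0 := by
                    rw [ha, hb, add_zero]
                  simp only [map_add]
                  rw [Finset.sum_add_distrib, ← h7]
                  abel
                exact ⟨ua + ub, h6⟩
              zero_mem' := ⟨0, by simp⟩
              smul_mem' := by
                rintro cc a ⟨ua, ha⟩
                have h6 : f t₀ (cc • a) + ∑ t : {t : κ // t ≠ t₀}, f t.1 (cc • ua t) = 0 := by
                  simp only [map_smul]
                  rw [← Finset.smul_sum, ← smul_add, ha, smul_zero]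
                exact ⟨cc • ua, h6⟩ } with hKdef
          have hK0 : u t₀ ∈ K := by
            have hs := hsplit κ t₀ V (fun t => f t (u t))
            rw [hsum] at hs
            exact ⟨fun t => u t.1, hs.symm⟩
          have hKbot : K ≠ ⊥ := by
            intro h
            rw [h, Submodule.mem_bot] at hK0
            exact hu0 hK0
          have hKinv : ∀ (g : ↥(S i₀)), ∀ w ∈ K, (res g).val w ∈ K := by
            rintro g w ⟨uu, huu⟩
            have h6 : f t₀ ((res g).val w)
                + ∑ t : {t : κ // t ≠ t₀}, f t.1 ((res g).val (uu t)) = 0 := by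
              rw [hfM t₀ g w, Finset.sum_congr rfl
                (fun t _ => hfM t.1 g (uu t)), ← map_sum, ← map_add, huu, map_zero]
            exact ⟨fun t => (res g).val (uu t), h6⟩
          have hKtop := hminK K hKbot hKinv
          have hmemK : ∀ w : ↥W₀, ∃ uu : {t : κ // t ≠ t₀} → ↥W₀,
              f t₀ w + ∑ t : {t : κ // t ≠ t₀}, f t.1 (uu t) = 0 := by
            intro w
            have hw : w ∈ K := by rw [hKtop]; trivial
            exact hw
          choose wit hwit using hmemK
          have hφex : ∀ t : {t : κ // t ≠ t₀}, ∃ cc : ℂ, ∀ w : ↥W₀, wit w t = cc • w := by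
            intro t
            set φ : Module.End ℂ ↥W₀ :=
              { toFun := fun w => wit w t
                map_add' := by
                  intro a b
                  have h6 : f t₀ (a + b)
                      + ∑ t : {t : κ // t ≠ t₀}, f t.1 (wit a t + wit b t) = 0 := by
                    have h7 : (f t₀ a + ∑ t : {t : κ // t ≠ t₀}, f t.1 (wit a t))
                        + (f t₀ b + ∑ t : {t : κ // t ≠ t₀}, f t.1 (wit b t)) = 0 := by
                      rw [hwit a, hwit b, add_zero]
                    simp only [map_add]
                    rw [Finset.sum_add_distrib, ← h7]
                    abel
                  exact huniq _ _ _ (hwit (a + b)) h6 t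
                map_smul' := by
                  intro cc a
                  have h6 : f t₀ (cc • a)
                      + ∑ t : {t : κ // t ≠ t₀}, f t.1 (cc • wit a t) = 0 := by
                    simp only [map_smul]
                    rw [← Finset.smul_sum, ← smul_add, hwit a, smul_zero]
                  exact huniq _ _ _ (hwit (cc • a)) h6 t } with hφdef
            have hφcomm : ∀ (g : ↥(S i₀)), Commute φ ((res g).val) := by
              intro g
              apply LinearMap.ext
              intro w
              simp only [Module.End.mul_apply]
              show wit ((res g).val w) t = (res g).val (wit w t)
              have h6 : f t₀ ((res g).val w)
                  + ∑ t : {t : κ // t ≠ t₀}, f t.1 ((res g).val (wit w t)) = 0 := by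
                rw [hfM t₀ g w, Finset.sum_congr rfl
                  (fun t _ => hfM t.1 g (wit w t)), ← map_sum, ← map_add, hwit w, map_zero]
              exact huniq _ _ _ (hwit ((res g).val w)) h6 t
            obtain ⟨cc, hcc⟩ := schur φ hφcomm
            refine ⟨cc, fun w => ?_⟩
            have h7 := LinearMap.congr_fun hcc w
            simpa [hφdef] using h7
          choose cS hcS using hφex
          have hGsum : ∑ t : κ, (if h : t = t₀ then (1 : ℂ) else cS ⟨t, h⟩) • f t = 0 := by
            have hs := hsplit κ t₀ (↥W₀ →ₗ[ℂ] V)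
              (fun t => (if h : t = t₀ then (1 : ℂ) else cS ⟨t, h⟩) • f t)
            rw [hs]
            simp only [dif_pos, one_smul]
            have h9 : ∀ t : {t : κ // t ≠ t₀},
                (if h : t.1 = t₀ then (1 : ℂ) else cS ⟨t.1, h⟩) • f t.1 = cS t • f t.1 := by
              intro t
              rw [dif_neg t.2]
            rw [Finset.sum_congr rfl (fun t _ => h9 t)]
            apply LinearMap.ext
            intro w
            simp only [LinearMap.add_apply, LinearMap.smul_apply, LinearMap.zero_apply]
            rw [LinearMap.sum_apply]
            simp only [LinearMap.smul_apply]
            have h8 := hwit w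
            rw [Finset.sum_congr rfl
              (fun t _ => by rw [hcS t w, map_smul] :
                ∀ t ∈ Finset.univ, f t.1 (wit w t) = cS t • f t.1 w)] at h8
            exact h8
          have h10 := Fintype.linearIndependent_iff.mp hind _ hGsum t₀
          rw [dif_pos rfl] at h10
          exact one_ne_zero h10
      haveI : Nontrivial ↥Mset := by
        refine Submodule.nontrivial_iff_ne_bot.mpr ?_
        intro h
        have hsub0 : W₀.subtype = 0 := by
          have h1 : W₀.subtype ∈ (⊥ : Submodule ℂ (↥W₀ →ₗ[ℂ] V)) := h ▸ hsub
          simpa using h1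
        obtain ⟨w, hw⟩ := exists_ne (0 : ↥W₀)
        apply hw
        have h2 := LinearMap.congr_fun hsub0 w
        exact Subtype.ext (by simpa using h2)
      set sM := Module.finrank ℂ ↥Mset with hsM
      have hs1 : 1 ≤ sM := Module.finrank_pos
      set bM := Module.finBasis ℂ ↥Mset with hbM
      set fam : Fin sM → (↥W₀ →ₗ[ℂ] V) := fun t => (bM t).1 with hfamdef
      have hfamM : ∀ t, fam t ∈ Mset := fun t => (bM t).2
      have hfamInd : LinearIndependent ℂ fam :=
        bM.linearIndependent.map' Mset.subtype (Submodule.ker_subtype Mset)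
      set k := Module.finrank ℂ ↥W₀ with hkdef
      set Ψ : (Fin sM → ↥W₀) →ₗ[ℂ] V :=
        { toFun := fun uv => ∑ t, fam t (uv t)
          map_add' := by
            intro a b
            simp only [Pi.add_apply, map_add]
            rw [Finset.sum_add_distrib]
          map_smul' := by
            intro cc a
            simp only [Pi.smul_apply, map_smul, RingHom.id_apply]
            rw [Finset.smul_sum] } with hΨdef
      have hΨinj : Function.Injective Ψ := by
        rw [← LinearMap.ker_eq_bot, LinearMap.ker_eq_bot']
        intro uv huv
        exact funext fun t => C sM (Fin sM) (by simp) fam hfamM hfamInd uv huv t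
      have hdim : sM * k ≤ Module.finrank ℂ V := by
        have h1 := LinearMap.finrank_le_finrank_of_injective hΨinj
        rw [Module.finrank_pi_fintype ℂ] at h1
        simpa [Finset.sum_const, Finset.card_univ, mul_comm] using h1
      have hk2 : 2 ≤ k := by
        rcases Nat.lt_or_ge k 2 with hklt | hge
        swap
        · exact hge
        exfalso
        have hkpos : 0 < k := hkdef ▸ Module.finrank_pos
        have hk1 : k = 1 := by omega
        set sSet : Set V := ⋃ f : ↥Mset, (LinearMap.range (f.1 : ↥W₀ →ₗ[ℂ] V) : Set V)
          with hsSetdef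
        have hspan : Submodule.span ℂ sSet = ⊤ := by
          rw [hsSetdef, Submodule.span_iUnion]
          simp only [Submodule.span_eq]
          rw [← hEdef]
          exact hEtop
        obtain ⟨b, hbsub, hbspan, hbind⟩ := exists_linearIndependent ℂ sSet
        rw [hspan] at hbspan
        have hscal : ∀ x : ↥(S i₀), ∀ v ∈ b, ∃ cc : ℂ, (x.1 : Module.End ℂ V) v = cc • v := by
          intro x v hv
          obtain ⟨rangeset, ⟨f, rfl⟩, hvf⟩ := hbsub hv
          have hv0 : v ≠ 0 := hbind.ne_zero ⟨v, hv⟩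
          have hrle : Module.finrank ℂ (LinearMap.range (f.1 : ↥W₀ →ₗ[ℂ] V)) ≤ 1 := by
            have h1 := LinearMap.finrank_range_le (f.1 : ↥W₀ →ₗ[ℂ] V)
            rw [← hkdef] at h1
            omega
          have hvf' : v ∈ LinearMap.range (f.1 : ↥W₀ →ₗ[ℂ] V) := hvf
          have hspanv : Submodule.span ℂ {v} = LinearMap.range (f.1 : ↥W₀ →ₗ[ℂ] V) := by
            apply Submodule.eq_of_le_of_finrank_le
            · exact (Submodule.span_singleton_le_iff_mem v _).mpr hvf'
            · rw [finrank_span_singleton hv0]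
              exact hrle
          have hgv : (x.1 : Module.End ℂ V) v ∈ LinearMap.range (f.1 : ↥W₀ →ₗ[ℂ] V) := by
            obtain ⟨w, rfl⟩ := hvf'
            exact ⟨(res x).val w, (f.2 x w).symm ▸ rfl⟩
          rw [← hspanv] at hgv
          obtain ⟨cc, hcc⟩ := Submodule.mem_span_singleton.mp hgv
          exact ⟨cc, hcc.symm⟩
        have habel : ∀ x y : ↥(S i₀), x * y = y * x := by
          intro x y
          apply Subtype.ext
          apply Units.ext
          apply LinearMap.ext_on hbspan
          intro v hv
          obtain ⟨cx, hcx⟩ := hscal x v hv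
          obtain ⟨cy, hcy⟩ := hscal y v hv
          simp only [Subgroup.coe_mul, Units.val_mul, Module.End.mul_apply]
          have e1 : (x.1 : Module.End ℂ V) ((y.1 : Module.End ℂ V) v) = cy • cx • v := by
            rw [hcy, map_smul, hcx]
          have e2 : (y.1 : Module.End ℂ V) ((x.1 : Module.End ℂ V) v) = cx • cy • v := by
            rw [hcx, map_smul, hcy]
          rw [e1, e2, smul_comm]
        exact hS i₀ (isSolvable_of_comm habel)
      have hcompM' : ∀ i : {i : ι // i ≠ i₀}, ∀ g ∈ S i.1, ∀ f ∈ Mset,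
          (g : Module.End ℂ V) ∘ₗ f ∈ Mset := fun i g hg f hf => hcompM i.1 i.2 g hg f hf
      set Φ : ∀ i : {i : ι // i ≠ i₀}, ↥(S i.1) →* (Module.End ℂ ↥Mset)ˣ :=
        fun i => postHom Mset (S i.1) (hcompM' i) with hΦdef
      have hΦinj : ∀ i, Function.Injective (Φ i) := by
        intro i
        refine (injective_iff_map_eq_one (Φ i)).mpr ?_
        intro z hz
        have hfix : ∀ f : ↥Mset, (z.1 : Module.End ℂ V) ∘ₗ (f.1 : ↥W₀ →ₗ[ℂ] V) = f.1 := by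
          intro f
          have h1 := congrArg
            (fun u : (Module.End ℂ ↥Mset)ˣ =>
              (((u : Module.End ℂ ↥Mset) f : ↥Mset) : ↥W₀ →ₗ[ℂ] V)) hz
          simp only [Units.val_one, Module.End.one_apply] at h1
          exact h1
        have hEfix : E ≤ LinearMap.ker ((z.1 : Module.End ℂ V) - 1) := by
          rw [hEdef]
          apply iSup_le
          rintro f v ⟨w, rfl⟩
          rw [LinearMap.mem_ker, LinearMap.sub_apply, Module.End.one_apply]
          have h2 := LinearMap.congr_fun (hfix f) w
          simp only [LinearMap.comp_apply] at h2
          rw [h2, sub_self]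
        rw [hEtop, top_le_iff] at hEfix
        have hz1 : (z.1 : Module.End ℂ V) - 1 = 0 := LinearMap.ker_eq_top.mp hEfix
        have hz2 : (z.1 : Module.End ℂ V) = 1 := by rwa [sub_eq_zero] at hz1
        exact Subtype.ext (Units.ext hz2)
      have hSsub : ∀ i : {i : ι // i ≠ i₀}, ¬ Group.IsSolvable ((Φ i).range) := by
        intro i hsolv
        apply hS i.1
        haveI := hsolv
        exact solvable_of_solvable_injective (f := (MonoidHom.ofInjective (hΦinj i)).toMonoidHom)
          (MulEquiv.injective _)
      have hcommsub : ∀ i j : {i : ι // i ≠ i₀}, i ≠ j →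
          ∀ x ∈ (Φ i).range, ∀ y ∈ (Φ j).range, Commute x y := by
        rintro i j hij x ⟨g, rfl⟩ y ⟨h, rfl⟩
        have hij' : i.1 ≠ j.1 := fun hh => hij (Subtype.ext hh)
        have hc := congrArg Units.val (hcomm i.1 j.1 hij' g.1 g.2 h.1 h.2)
        simp only [Units.val_mul] at hc
        show _ * _ = _ * _
        refine Units.ext (LinearMap.ext fun f => Subtype.ext (LinearMap.ext fun w => ?_))
        simp only [Units.val_mul, Module.End.mul_apply, hΦdef, postHom_apply_coe,
          LinearMap.comp_apply]
        have h3 := LinearMap.congr_fun hc ((f : ↥W₀ →ₗ[ℂ] V) w)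
        simp only [Module.End.mul_apply] at h3
        exact h3
      have hlin : sM * 2 ≤ Module.finrank ℂ V :=
        le_trans (Nat.mul_le_mul_left sM hk2) hdim
      have hsMN : sM ≤ N := by omega
      have hIH := IH ↥Mset hsMN {i : ι // i ≠ i₀} (fun i => (Φ i).range) hSsub hcommsub
      have hcard : Fintype.card {i : ι // i ≠ i₀} = Fintype.card ι - 1 := by
        have h1 : Fintype.card {i : ι // i ≠ i₀}
            = Fintype.card ι - Fintype.card {i : ι // i = i₀} :=
          Fintype.card_subtype_compl _
        have h2 := Fintype.card_subtype_eq i₀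
        omega
      have hn1 : 1 ≤ Fintype.card ι := Fintype.card_pos_iff.mpr ⟨i₀⟩
      rw [← hsM] at hIH
      omega

theorem stmt_4 (n d : ℕ) (H : Fin n → Type) [∀ i, Group (H i)]
    (hH : ∀ i, ¬ IsSolvable (H i))
    (ρ : ((i : Fin n) → H i) →* Matrix.GeneralLinearGroup (Fin d) ℂ)
    (hρ : Function.Injective ρ) :
    2 * n ≤ d := by
  classical
  set e : Matrix.GeneralLinearGroup (Fin d) ℂ ≃* (Module.End ℂ (Fin d → ℂ))ˣ :=
    Matrix.GeneralLinearGroup.toLin with hedef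
  set ψ : ∀ i : Fin n, H i →* (Module.End ℂ (Fin d → ℂ))ˣ :=
    fun i => e.toMonoidHom.comp (ρ.comp (MonoidHom.mulSingle H i)) with hψdef
  have hsingle_inj : ∀ i, Function.Injective (MonoidHom.mulSingle H i) := by
    intro i a b hab
    have := congrFun hab i
    simpa using this
  have hψinj : ∀ i, Function.Injective (ψ i) := by
    intro i
    exact e.injective.comp (hρ.comp (hsingle_inj i))
  have hS : ∀ i, ¬ Group.IsSolvable ((ψ i).range) := by
    intro i hsolv
    apply hH i
    haveI := hsolv
    exact solvable_of_solvable_injective (f := (MonoidHom.ofInjective (hψinj i)).toMonoidHom)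
      (MulEquiv.injective _)
  have hcomm : ∀ i j : Fin n, i ≠ j → ∀ x ∈ (ψ i).range, ∀ y ∈ (ψ j).range, Commute x y := by
    rintro i j hij x ⟨a, rfl⟩ y ⟨b, rfl⟩
    have h1 : Commute (Pi.mulSingle i a) (Pi.mulSingle j b) := Pi.mulSingle_commute hij a b
    exact (h1.map (e.toMonoidHom.comp ρ) : _)
  have hfr : Module.finrank ℂ (Fin d → ℂ) = d := by
    rw [Module.finrank_pi ℂ]
    simp
  have := master d (Fin d → ℂ) (le_of_eq hfr) (Fin n) (fun i => (ψ i).range) hS hcomm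
  rw [hfr, Fintype.card_fin] at this
  exact this
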